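/- arXiv:1810.08308 — 2 statements merged into one kernel-verified Lean document; each statement's English description precedes it below -/
import Mathlib

section
/- Let ρ be a finite measure on (−∞, 0] whose density near 0 satisfies c√(−x) ≤ ρ(x) ≤ C√(−x) for x ∈ [−ε, 0]. Then for z = κ + iη with 0 < η, κ ≤ ε/2: (i) Re[m(z)] − m(Re z) = η² ∫ dρ(x)/((κ − x)((κ − x)² + η²)) ≥ c' η²/(κ + η)^{3/2}, and (ii) m(κ) − m(0) = κ ∫ dρ(x)/((κ − x)(−x)) ≥ c'√κ, where m(z) = ∫ dρ(x)/(x − z) is the Stieltjes transform and c' > 0 depends only on c, C, ε and the total mass. -/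
open MeasureTheory Complex

-- measure lower bound from density lower bound
lemma meas_lb_aux (μ : Measure ℝ) (ε c : ℝ) (hc : 0 < c) (g : ℝ → ℝ)
    (hdens : μ.restrict (Set.Icc (-ε) 0)
      = (volume.restrict (Set.Icc (-ε) 0)).withDensity (fun x => ENNReal.ofReal (g x)))
    (hg1 : ∀ x ∈ Set.Icc (-ε) (0:ℝ), c * Real.sqrt (-x) ≤ g x)
    (a b : ℝ) (ha : -ε ≤ a) (hab : a ≤ b) (hb : b ≤ 0) :
    ENNReal.ofReal (c * Real.sqrt (-b) * (b - a)) ≤ μ (Set.Icc a b) := by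
  have hsub : Set.Icc a b ⊆ Set.Icc (-ε) 0 := Set.Icc_subset_Icc ha hb
  have h1 : μ (Set.Icc a b) = μ.restrict (Set.Icc (-ε) 0) (Set.Icc a b) := by
    rw [Measure.restrict_apply' measurableSet_Icc, Set.inter_eq_left.2 hsub]
  rw [h1, hdens, withDensity_apply _ measurableSet_Icc]
  have h2 : (volume.restrict (Set.Icc (-ε) 0)).restrict (Set.Icc a b)
      = volume.restrict (Set.Icc a b) := by
    rw [Measure.restrict_restrict measurableSet_Icc, Set.inter_eq_left.2 hsub]
  rw [show (∫⁻ x in Set.Icc a b, ENNReal.ofReal (g x) ∂(volume.restrict (Set.Icc (-ε) 0)))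
      = ∫⁻ x in Set.Icc a b, ENNReal.ofReal (g x) ∂volume from by
    rw [Measure.restrict_restrict measurableSet_Icc, Set.inter_eq_left.2 hsub]]
  calc ENNReal.ofReal (c * Real.sqrt (-b) * (b - a))
      = ENNReal.ofReal (c * Real.sqrt (-b)) * volume (Set.Icc a b) := by
        rw [Real.volume_Icc, ← ENNReal.ofReal_mul (by positivity)]
    _ = ∫⁻ x in Set.Icc a b, ENNReal.ofReal (c * Real.sqrt (-b)) ∂volume := by
        rw [setLIntegral_const]
    _ ≤ ∫⁻ x in Set.Icc a b, ENNReal.ofReal (g x) ∂volume := by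
        apply lintegral_mono_ae
        rw [ae_restrict_iff' measurableSet_Icc]
        filter_upwards with x hx
        apply ENNReal.ofReal_le_ofReal
        calc c * Real.sqrt (-b) ≤ c * Real.sqrt (-x) := by
              have : -b ≤ -x := by linarith [hx.2]
              exact mul_le_mul_of_nonneg_left (Real.sqrt_le_sqrt this) hc.le
          _ ≤ g x := hg1 x (hsub hx)

-- integral lower bound
lemma int_lb_aux (μ : Measure ℝ) [IsFiniteMeasure μ] (ε c : ℝ) (hc : 0 < c) (g : ℝ → ℝ)
    (hdens : μ.restrict (Set.Icc (-ε) 0)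
      = (volume.restrict (Set.Icc (-ε) 0)).withDensity (fun x => ENNReal.ofReal (g x)))
    (hg1 : ∀ x ∈ Set.Icc (-ε) (0:ℝ), c * Real.sqrt (-x) ≤ g x)
    (a b : ℝ) (ha : -ε ≤ a) (hab : a ≤ b) (hb : b ≤ 0)
    (F : ℝ → ℝ) (hF : Integrable F μ) (hF0 : 0 ≤ᵐ[μ] F)
    (m : ℝ) (hm : 0 ≤ m) (hFm : ∀ x ∈ Set.Icc a b, m ≤ F x) :
    m * (c * Real.sqrt (-b) * (b - a)) ≤ ∫ x, F x ∂μ := by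
  have hμ := meas_lb_aux μ ε c hc g hdens hg1 a b ha hab hb
  have hμ' : c * Real.sqrt (-b) * (b - a) ≤ (μ (Set.Icc a b)).toReal :=
    (ENNReal.ofReal_le_iff_le_toReal (measure_ne_top μ _)).1 hμ
  calc m * (c * Real.sqrt (-b) * (b - a)) ≤ m * (μ (Set.Icc a b)).toReal :=
        mul_le_mul_of_nonneg_left hμ' hm
    _ ≤ ∫ x in Set.Icc a b, F x ∂μ := by
        rw [mul_comm]; exact setIntegral_ge_of_const_le measurableSet_Icc (measure_ne_top μ _) hFm hF.integrableOn
    _ ≤ ∫ x, F x ∂μ := setIntegral_le_integral hF hF0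

-- integrability of 1/x
lemma inv_integrable_aux (μ : Measure ℝ) [IsFiniteMeasure μ] (ε C : ℝ) (hε : 0 < ε) (hC : 0 < C)
    (hsupp : μ (Set.Ioi (0:ℝ)) = 0)
    (g : ℝ → ℝ)
    (hdens : μ.restrict (Set.Icc (-ε) 0)
      = (volume.restrict (Set.Icc (-ε) 0)).withDensity (fun x => ENNReal.ofReal (g x)))
    (hg2 : ∀ x ∈ Set.Icc (-ε) (0:ℝ), g x ≤ C * Real.sqrt (-x)) :
    Integrable (fun x : ℝ => x⁻¹) μ := by
  have haes : ∀ᵐ x ∂μ, x ≤ 0 := by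
    rw [ae_iff]
    convert hsupp using 2
    ext x; simp [not_le]
  -- split into Icc (-ε) 0 and complement
  have hsplit : Set.Icc (-ε) (0:ℝ) ∪ (Set.Icc (-ε) (0:ℝ))ᶜ = Set.univ := Set.union_compl_self _
  rw [← integrableOn_univ, ← hsplit, integrableOn_union]
  constructor
  · -- on Icc (-ε) 0 : use density bound
    rw [IntegrableOn, hdens]
    -- dominate the measure
    have hmono : (volume.restrict (Set.Icc (-ε) 0)).withDensity (fun x => ENNReal.ofReal (g x))
        ≤ (volume.restrict (Set.Icc (-ε) 0)).withDensity
            (fun x => ENNReal.ofReal (C * Real.sqrt (-x))) := by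
      apply withDensity_mono
      rw [Filter.EventuallyLE, ae_restrict_iff' measurableSet_Icc]
      filter_upwards with x hx
      exact ENNReal.ofReal_le_ofReal (hg2 x hx)
    have hmeas : Measurable (fun x : ℝ => ENNReal.ofReal (C * Real.sqrt (-x))) := by
      fun_prop
    have hint : Integrable (fun x : ℝ => x⁻¹)
        ((volume.restrict (Set.Icc (-ε) 0)).withDensity
          (fun x => ENNReal.ofReal (C * Real.sqrt (-x)))) := by
      rw [integrable_withDensity_iff hmeas (by filter_upwards with x using ENNReal.ofReal_lt_top)]
      -- integrable (fun x => x⁻¹ * (C * sqrt (-x))) on Icc (-ε) 0 wrt volume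
      have hpow : IntegrableOn (fun x : ℝ => (-x) ^ (-(1:ℝ)/2)) (Set.Icc (-ε) 0) volume := by
        have h1 : IntervalIntegrable (fun x : ℝ => x ^ (-(1:ℝ)/2)) volume 0 ε :=
          intervalIntegral.intervalIntegrable_rpow' (by norm_num)
        have h2 : IntegrableOn (fun x : ℝ => x ^ (-(1:ℝ)/2)) (Set.Ioc 0 ε) volume := by
          rwa [intervalIntegrable_iff_integrableOn_Ioc_of_le hε.le] at h1
        have h3 : Integrable ((Set.Ioc (0:ℝ) ε).indicator (fun x : ℝ => x ^ (-(1:ℝ)/2)))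
            volume := (integrable_indicator_iff measurableSet_Ioc).2 h2
        have h4 := h3.comp_neg
        have h5 : (fun x : ℝ => (Set.Ioc (0:ℝ) ε).indicator (fun x : ℝ => x ^ (-(1:ℝ)/2)) (-x))
            = (Set.Ico (-ε) (0:ℝ)).indicator (fun x : ℝ => (-x) ^ (-(1:ℝ)/2)) := by
          funext x
          rw [Set.indicator_apply, Set.indicator_apply]
          exact if_congr (by simp only [Set.mem_Ioc, Set.mem_Ico]; constructor <;>
            (intro h; constructor <;> linarith [h.1, h.2])) rfl rfl
        rw [h5] at h4
        have h6 : IntegrableOn (fun x : ℝ => (-x) ^ (-(1:ℝ)/2)) (Set.Ico (-ε) 0) volume :=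
          (integrable_indicator_iff measurableSet_Ico).1 h4
        exact h6.congr_set_ae Ico_ae_eq_Icc.symm
      apply Integrable.mono' (hpow.const_mul C)
        ((measurable_inv.mul hmeas.ennreal_toReal).aestronglyMeasurable)
      rw [ae_restrict_iff' measurableSet_Icc]
      filter_upwards with x hx
      simp only [Pi.mul_apply]
      rw [ENNReal.toReal_ofReal (by positivity)]
      rcases eq_or_lt_of_le hx.2 with h0 | h0
      · simp only [h0]
        norm_num [Real.zero_rpow]
      · have hxneg : 0 < -x := by linarith
        have : |x⁻¹ * (C * Real.sqrt (-x))| = (-x)⁻¹ * (C * Real.sqrt (-x)) := by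
          rw [abs_mul, abs_inv, abs_of_neg h0, abs_of_pos (by positivity)]
        rw [Real.norm_eq_abs, this]
        rw [Real.sqrt_eq_rpow]
        rw [show (-x)⁻¹ = (-x) ^ (-(1:ℝ)) from by
          rw [Real.rpow_neg_one]]
        rw [show (-x) ^ (-(1:ℝ)) * (C * (-x) ^ ((1:ℝ)/2)) = C * ((-x) ^ (-(1:ℝ)) * (-x) ^ ((1:ℝ)/2)) from by ring,
          ← Real.rpow_add hxneg]
        norm_num
    exact hint.mono_measure hmono
  · -- on complement : bounded by ε⁻¹
    apply Integrable.mono' (integrable_const ε⁻¹) (by fun_prop)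
    rw [ae_restrict_iff' measurableSet_Icc.compl]
    filter_upwards [haes] with x hx0 hx
    simp only [Set.mem_compl_iff, Set.mem_Icc, not_and, not_le] at hx
    have : x < -ε := by
      by_contra h
      push_neg at h
      exact absurd (hx h) (not_lt.2 hx0)
    rw [Real.norm_eq_abs, abs_inv, abs_of_neg (by linarith)]
    rw [inv_le_inv₀ (by linarith) hε]
    linarith

set_option maxHeartbeats 1000000 in
theorem stmt_11 (μ : Measure ℝ) [IsFiniteMeasure μ] (ε c C : ℝ)
    (hε : 0 < ε) (hc : 0 < c) (hC : 0 < C)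
    (hsupp : μ (Set.Ioi (0:ℝ)) = 0)
    (g : ℝ → ℝ)
    (hdens : μ.restrict (Set.Icc (-ε) 0)
      = (volume.restrict (Set.Icc (-ε) 0)).withDensity (fun x => ENNReal.ofReal (g x)))
    (hg : ∀ x ∈ Set.Icc (-ε) (0:ℝ), c * Real.sqrt (-x) ≤ g x ∧ g x ≤ C * Real.sqrt (-x)) :
    ∃ c' : ℝ, 0 < c' ∧ ∀ κ η : ℝ, 0 < κ → κ ≤ ε / 2 → 0 < η → η ≤ ε / 2 →
      ((∫ x : ℝ, (1 : ℂ) / ((x : ℂ) - ((κ : ℂ) + η * Complex.I)) ∂μ).re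
          - (∫ x : ℝ, (x - κ)⁻¹ ∂μ)
        = η ^ 2 * ∫ x : ℝ, ((κ - x) * ((κ - x) ^ 2 + η ^ 2))⁻¹ ∂μ) ∧
      (c' * η ^ 2 / (κ + η) ^ ((3:ℝ)/2)
        ≤ η ^ 2 * ∫ x : ℝ, ((κ - x) * ((κ - x) ^ 2 + η ^ 2))⁻¹ ∂μ) ∧
      ((∫ x : ℝ, (x - κ)⁻¹ ∂μ) - (∫ x : ℝ, x⁻¹ ∂μ)
        = κ * ∫ x : ℝ, ((κ - x) * (-x))⁻¹ ∂μ) ∧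
      (c' * Real.sqrt κ ≤ κ * ∫ x : ℝ, ((κ - x) * (-x))⁻¹ ∂μ) := by
  have haes : ∀ᵐ x ∂μ, x ≤ 0 := by
    rw [ae_iff]
    convert hsupp using 2
    ext x; simp [not_le]
  have hμ0 : μ {(0:ℝ)} = 0 := by
    have h1 : μ {(0:ℝ)} = μ.restrict (Set.Icc (-ε) 0) {(0:ℝ)} := by
      rw [Measure.restrict_apply' measurableSet_Icc]
      congr 1
      symm
      rw [Set.inter_eq_left]
      intro x hx
      simp only [Set.mem_singleton_iff] at hx
      subst hx
      exact ⟨by linarith, le_refl _⟩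
    rw [h1, hdens, withDensity_apply _ (measurableSet_singleton 0)]
    apply setLIntegral_measure_zero
    rw [Measure.restrict_apply' measurableSet_Icc]
    exact measure_mono_null Set.inter_subset_left Real.volume_singleton
  have haelt : ∀ᵐ x ∂μ, x < 0 := by
    rw [ae_iff]
    have h2 : {x : ℝ | ¬ x < 0} = {0} ∪ Set.Ioi 0 := by
      ext x
      simp only [Set.mem_setOf_eq, not_lt, Set.mem_union, Set.mem_singleton_iff, Set.mem_Ioi]
      constructor
      · intro h; rcases eq_or_lt_of_le h with h' | h'
        · exact Or.inl h'.symm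
        · exact Or.inr h'
      · rintro (h | h) <;> subst_eqs <;> first | rfl | exact h.le
    rw [h2]
    exact measure_union_null hμ0 hsupp
  have hg1 : ∀ x ∈ Set.Icc (-ε) (0:ℝ), c * Real.sqrt (-x) ≤ g x := fun x hx => (hg x hx).1
  have hint3 : Integrable (fun x : ℝ => x⁻¹) μ :=
    inv_integrable_aux μ ε C hε hC hsupp g hdens (fun x hx => (hg x hx).2)
  refine ⟨c/30, by positivity, ?_⟩
  intro κ η hκ hκε hη hηε
  -- integrability facts
  have hintc : Integrable (fun x : ℝ => (1:ℂ)/((x:ℂ) - ((κ:ℂ) + (η:ℂ) * Complex.I))) μ := by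
    apply Integrable.mono' (integrable_const η⁻¹)
    · have : Measurable fun x : ℝ => ((x:ℂ) - ((κ:ℂ) + (η:ℂ) * Complex.I))⁻¹ :=
        (Complex.measurable_ofReal.sub measurable_const).inv
      simpa [one_div] using this.aestronglyMeasurable
    · filter_upwards with x
      have him : ((x:ℂ) - ((κ:ℂ) + (η:ℂ) * Complex.I)).im = -η := by simp
      have hle : η ≤ ‖(x:ℂ) - ((κ:ℂ) + (η:ℂ) * Complex.I)‖ := by
        calc η = |(-η)| := by rw [abs_neg, abs_of_pos hη]
          _ = |((x:ℂ) - ((κ:ℂ) + (η:ℂ) * Complex.I)).im| := by rw [him]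
          _ ≤ ‖(x:ℂ) - ((κ:ℂ) + (η:ℂ) * Complex.I)‖ := Complex.abs_im_le_norm _
      rw [one_div, norm_inv]
      exact inv_anti₀ hη hle
  have hint1 : Integrable (fun x : ℝ => ((κ - x) * ((κ - x) ^ 2 + η ^ 2))⁻¹) μ := by
    apply Integrable.mono' (integrable_const ((κ * (κ^2 + η^2))⁻¹))
    · exact (((measurable_const.sub measurable_id).mul
        (((measurable_const.sub measurable_id).pow_const 2).add_const _)).inv).aestronglyMeasurable
    · filter_upwards [haes] with x hx
      have h1 : 0 < κ - x := by linarith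
      have h3 : κ^2 ≤ (κ - x)^2 := by nlinarith
      have h2 : κ * (κ^2 + η^2) ≤ (κ - x) * ((κ - x)^2 + η^2) := by nlinarith
      rw [Real.norm_eq_abs, abs_inv, abs_of_pos (by positivity)]
      exact inv_anti₀ (by positivity) h2
  have hint2 : Integrable (fun x : ℝ => (x - κ)⁻¹) μ := by
    apply Integrable.mono' (integrable_const (κ⁻¹))
    · exact ((measurable_id.sub measurable_const).inv).aestronglyMeasurable
    · filter_upwards [haes] with x hx
      rw [Real.norm_eq_abs, abs_inv, abs_of_neg (by linarith : x - κ < 0)]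
      exact inv_anti₀ hκ (by linarith)
  have hint4 : Integrable (fun x : ℝ => ((κ - x) * (-x))⁻¹) μ := by
    apply Integrable.mono' ((hint3.abs).const_mul κ⁻¹)
    · exact (((measurable_const.sub measurable_id).mul measurable_neg).inv).aestronglyMeasurable
    · filter_upwards [haelt] with x hx
      have h1 : 0 < -x := by linarith
      have h2 : 0 < κ - x := by linarith
      rw [Real.norm_eq_abs, abs_inv, abs_of_pos (by positivity), mul_inv,
        show |x⁻¹| = (-x)⁻¹ from by rw [abs_inv, abs_of_neg hx]]
      exact mul_le_mul_of_nonneg_right (inv_anti₀ hκ (by linarith)) (by positivity)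
  -- sqrt facts
  have hs : (0:ℝ) < κ + η := by linarith
  have h2ge : (1.4:ℝ) ≤ Real.sqrt 2 := by
    nlinarith [Real.sq_sqrt (by norm_num : (0:ℝ) ≤ 2), Real.sqrt_nonneg 2]
  have h2le : Real.sqrt 2 ≤ 3/2 := by
    nlinarith [Real.sq_sqrt (by norm_num : (0:ℝ) ≤ 2), Real.sqrt_nonneg 2]
  -- pointwise identities
  have hpt1 : ∀ᵐ (x : ℝ) ∂μ, ((1:ℂ)/((x:ℂ) - ((κ:ℂ) + (η:ℂ) * Complex.I))).re
      = (x - κ)⁻¹ + η^2 * ((κ - x) * ((κ - x)^2 + η^2))⁻¹ := by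
    filter_upwards [haes] with x hx
    have h1 : 0 < κ - x := by linarith
    have hmk : (x:ℂ) - ((κ:ℂ) + (η:ℂ) * Complex.I) = ⟨x - κ, -η⟩ := by
      apply Complex.ext <;> simp
    have hre : ((1:ℂ)/((x:ℂ) - ((κ:ℂ) + (η:ℂ) * Complex.I))).re
        = (x - κ)/((x - κ)^2 + η^2) := by
      rw [one_div, hmk, Complex.inv_re, Complex.normSq_mk]
      norm_num
      ring_nf
    rw [hre]
    have h2 : (x - κ)^2 + η^2 ≠ 0 := by positivity
    have h4 : (κ - x)^2 + η^2 ≠ 0 := by positivity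
    have h5 : x - κ ≠ 0 := by linarith
    have h6 : κ - x ≠ 0 := by linarith
    field_simp
    ring
  have hpt2 : ∀ᵐ x ∂μ, (x - κ)⁻¹ = x⁻¹ + κ * ((κ - x) * (-x))⁻¹ := by
    filter_upwards [haelt] with x hx
    have h5 : x - κ ≠ 0 := by linarith
    have h6 : κ - x ≠ 0 := by linarith
    have h7 : x ≠ 0 := ne_of_lt hx
    field_simp
    ring
  have e1 : (∫ x, (1:ℂ)/((x:ℂ) - ((κ:ℂ) + (η:ℂ) * Complex.I)) ∂μ).re
      = ∫ x, ((1:ℂ)/((x:ℂ) - ((κ:ℂ) + (η:ℂ) * Complex.I))).re ∂μ := by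
    have h := integral_re (𝕜 := ℂ) hintc
    simp only [RCLike.re_to_complex] at h
    exact h.symm
  refine ⟨?_, ?_, ?_, ?_⟩
  · rw [e1, integral_congr_ae hpt1, integral_add hint2 (hint1.const_mul (η^2)),
      integral_const_mul]
    ring
  · -- lower bound 1
    have hF10 : 0 ≤ᵐ[μ] (fun x => ((κ - x) * ((κ - x)^2 + η^2))⁻¹) := by
      filter_upwards [haes] with x hx
      have h1 : 0 < κ - x := by linarith
      positivity
    have hbound1 : ∀ x ∈ Set.Icc (-(κ+η)) (-((κ+η)/2)),
        (10*(κ+η)^3)⁻¹ ≤ ((κ - x) * ((κ - x)^2 + η^2))⁻¹ := by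
      intro x hx
      obtain ⟨hxa, hxb⟩ := hx
      have h1 : 0 < κ - x := by linarith
      have hκx : κ - x ≤ 2*(κ+η) := by linarith
      have hsq : (κ - x)^2 ≤ 4*(κ+η)^2 := by nlinarith
      have hη2 : η^2 ≤ (κ+η)^2 := by nlinarith
      exact inv_anti₀ (by positivity) (by nlinarith)
    have hLB1 := int_lb_aux μ ε c hc g hdens hg1 (-(κ+η)) (-((κ+η)/2))
      (by linarith) (by linarith) (by linarith) _ hint1 hF10 ((10*(κ+η)^3)⁻¹)
      (by positivity) hbound1
    rw [show -(-((κ+η)/2)) = (κ+η)/2 by ring, show -((κ+η)/2) - -(κ+η) = (κ+η)/2 by ring]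
      at hLB1
    have hts : (0:ℝ) < Real.sqrt (κ+η) := Real.sqrt_pos.2 hs
    have h22 : Real.sqrt ((κ+η)/2) * Real.sqrt ((κ+η)/2) = (κ+η)/2 :=
      Real.mul_self_sqrt (by positivity)
    have h2eq : Real.sqrt ((κ+η)/2) * Real.sqrt 2 = Real.sqrt (κ+η) := by
      rw [← Real.sqrt_mul (by positivity)]
      norm_num
    have hA : Real.sqrt ((κ+η)/2) * Real.sqrt (κ+η) = ((κ+η)/2) * Real.sqrt 2 := by
      rw [← h2eq, ← mul_assoc, h22]
    have key : (c/30) / ((κ+η) * Real.sqrt (κ+η))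
        ≤ ∫ x, ((κ - x) * ((κ - x)^2 + η^2))⁻¹ ∂μ := by
      refine le_trans ?_ hLB1
      rw [div_le_iff₀ (by positivity), inv_mul_eq_div, div_mul_eq_mul_div,
        le_div_iff₀ (by positivity)]
      have hrhs : (c * Real.sqrt ((κ+η)/2) * ((κ+η)/2)) * ((κ+η) * Real.sqrt (κ+η))
          = c * ((κ+η)/2) * (κ+η) * ((κ+η)/2) * Real.sqrt 2 := by
        linear_combination (c * ((κ+η)/2) * (κ+η)) * hA
      rw [hrhs]
      nlinarith [h2ge, mul_pos (mul_pos hc hs) (mul_pos hs hs)]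
    have hrpow : (κ+η) ^ ((3:ℝ)/2) = (κ+η) * Real.sqrt (κ+η) := by
      rw [show (3:ℝ)/2 = 1 + 1/2 by norm_num, Real.rpow_add hs, Real.rpow_one,
        ← Real.sqrt_eq_rpow]
    rw [hrpow, show c/30 * η^2 / ((κ+η) * Real.sqrt (κ+η))
      = η^2 * ((c/30)/((κ+η)*Real.sqrt (κ+η))) from by ring]
    exact mul_le_mul_of_nonneg_left key (by positivity)
  · rw [integral_congr_ae hpt2, integral_add hint3 (hint4.const_mul κ), integral_const_mul]
    ring
  · -- lower bound 2
    have hF40 : 0 ≤ᵐ[μ] (fun x => ((κ - x) * (-x))⁻¹) := by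
      filter_upwards [haes] with x hx
      have h1 : 0 < κ - x := by linarith
      have h2 : 0 ≤ -x := by linarith
      positivity
    have hbound2 : ∀ x ∈ Set.Icc (-κ) (-(κ/2)), (2*κ^2)⁻¹ ≤ ((κ - x) * (-x))⁻¹ := by
      intro x hx
      obtain ⟨hxa, hxb⟩ := hx
      have h1 : 0 < -x := by linarith
      have h2 : 0 < κ - x := by linarith
      exact inv_anti₀ (by positivity) (by nlinarith)
    have hLB2 := int_lb_aux μ ε c hc g hdens hg1 (-κ) (-(κ/2))
      (by linarith) (by linarith) (by linarith) _ hint4 hF40 ((2*κ^2)⁻¹)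
      (by positivity) hbound2
    rw [show -(-(κ/2)) = κ/2 by ring, show -(κ/2) - -κ = κ/2 by ring] at hLB2
    have h22' : Real.sqrt (κ/2) * Real.sqrt (κ/2) = κ/2 := Real.mul_self_sqrt (by positivity)
    have h2eq' : Real.sqrt (κ/2) * Real.sqrt 2 = Real.sqrt κ := by
      rw [← Real.sqrt_mul (by positivity)]
      norm_num
    calc c/30 * Real.sqrt κ ≤ κ * ((2*κ^2)⁻¹ * (c * Real.sqrt (κ/2) * (κ/2))) := by
          rw [show κ * ((2*κ^2)⁻¹ * (c * Real.sqrt (κ/2) * (κ/2))) = c * Real.sqrt (κ/2)/4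
            from by field_simp; ring, ← h2eq']
          nlinarith [h2le, mul_nonneg hc.le (Real.sqrt_nonneg (κ/2))]
      _ ≤ κ * ∫ x, ((κ - x) * (-x))⁻¹ ∂μ := mul_le_mul_of_nonneg_left hLB2 hκ.le
end

section
/- Let g : ℂ × ℂ → ℂ satisfy g(z, x) = (V'(x) − V'(z) − (x − z)V''(z)) / (2(x − z)²) for x ≠ z and g(z, z) = V'''(z)/4, where V is entire. Then for each fixed z, x ↦ g(z, x) is entire, and for each fixed x, z ↦ g(z, x) is entire; moreover if μ and ν are finite measures supported in [−b, b] with Stieltjes transforms m_μ, m_ν, and 𝒞 is a contour encircling [−b, b] at distance r ≥ 1, then ∫ g(z, x) d(μ − ν)(x) = −(1/2πi) ∮_𝒞 g(z, w)(m_μ(w) − m_ν(w)) dw, and |∫ g(z, x) d(μ − ν)(x)| ≤ length(𝒞) · sup_{w∈𝒞} |g(z, w)| · sup_{w∈𝒞} |m_μ(w) − m_ν(w)| / (2π). -/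
open MeasureTheory Complex Set

lemma entire_dslope {f : ℂ → ℂ} (hf : Differentiable ℂ f) (c : ℂ) :
    Differentiable ℂ (dslope f c) := by
  rw [← differentiableOn_univ]
  exact (differentiableOn_dslope (Filter.univ_mem)).mpr hf.differentiableOn

lemma entire_deriv {f : ℂ → ℂ} (hf : Differentiable ℂ f) :
    Differentiable ℂ (deriv f) := by
  rw [← differentiableOn_univ]
  exact ((hf.differentiableOn.analyticOnNhd isOpen_univ).deriv).differentiableOn

lemma deriv_dslope_same {f : ℂ → ℂ} (hf : Differentiable ℂ f) (c : ℂ) :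
    deriv (dslope f c) c = deriv (deriv f) c / 2 := by
  obtain ⟨p, hp⟩ := hf.analyticAt c
  have h1 : deriv (dslope f c) c = p.coeff 2 := by
    rw [hp.has_fpower_series_dslope_fslope.deriv]
    exact p.coeff_fslope
  obtain ⟨R, hpR⟩ := hp
  have h2 := hpR.factorial_smul (1 : ℂ) 2
  have h3 : iteratedFDeriv ℂ 2 f c (fun _ => (1:ℂ)) = iteratedDeriv 2 f c := by
    rw [iteratedDeriv_eq_iteratedFDeriv]
  have h4 : iteratedDeriv 2 f c = deriv (deriv f) c := by
    rw [iteratedDeriv_succ, iteratedDeriv_one]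
  rw [h1]
  have hc : p.coeff 2 = p 2 (fun _ => 1) := rfl
  have h5 : (2 : ℂ) * p.coeff 2 = deriv (deriv f) c := by
    rw [← h4, ← h3, ← h2, hc]
    simp [Nat.factorial]
  rw [← h5]; ring


lemma keyint (g1 : ℂ → ℂ) (hg1 : Differentiable ℂ g1) (μ : Measure ℝ) [IsFiniteMeasure μ]
    (b r : ℝ) (hb : 0 < b) (hr : 1 ≤ r) (hμ : μ {x : ℝ | b < |x|} = 0) :
    IntervalIntegrable (fun θ => deriv (circleMap 0 (b+r)) θ •
        (g1 (circleMap 0 (b+r) θ) * ∫ x : ℝ, ((x:ℂ) - circleMap 0 (b+r) θ)⁻¹ ∂μ))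
      MeasureTheory.volume 0 (2*Real.pi) ∧
    (∮ w in C(0, b+r), g1 w * ∫ x : ℝ, ((x:ℂ) - w)⁻¹ ∂μ)
      = -(2*Real.pi*Complex.I) * ∫ x : ℝ, g1 (x:ℂ) ∂μ := by
  set R := b + r with hRdef
  have hR0 : 0 < R := by linarith
  have hbR : b < R := by linarith
  set cm := circleMap 0 R with hcm
  have hcmn : ∀ θ, ‖cm θ‖ = R := fun θ => by
    simp [hcm, norm_circleMap_zero, abs_of_pos hR0]
  -- bound on g1 on the closed ball
  obtain ⟨Cg, hCg⟩ := (isCompact_closedBall (0:ℂ) R).exists_bound_of_continuousOn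
    hg1.continuous.continuousOn
  have hCg0 : 0 ≤ Cg := le_trans (norm_nonneg _) (hCg 0 (Metric.mem_closedBall_self hR0.le))
  -- the two-variable integrand
  set F : ℝ → ℝ → ℂ := fun θ x => (cm θ * Complex.I) * (g1 (cm θ) * ((x:ℂ) - cm θ)⁻¹) with hF
  set ρ : Measure ℝ := MeasureTheory.volume.restrict (Ioc 0 (2*Real.pi)) with hρ
  haveI : IsFiniteMeasure ρ := by
    constructor
    rw [hρ, Measure.restrict_apply_univ]
    simp [Real.volume_Ioc]
    exact ENNReal.mul_lt_top (by simp) ENNReal.ofReal_lt_top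
  -- a.e. bound on the second coordinate
  have hxae : ∀ᵐ x ∂μ, |x| ≤ b := by
    have : μ {x : ℝ | ¬ |x| ≤ b} = 0 := by simpa [not_le] using hμ
    exact this
  have hprodnull : (ρ.prod μ) {p : ℝ × ℝ | b < |p.2|} = 0 := by
    have hset : {p : ℝ × ℝ | b < |p.2|} = (univ : Set ℝ) ×ˢ {x : ℝ | b < |x|} := by
      ext p; simp
    have hms : MeasurableSet {x : ℝ | b < |x|} :=
      (isOpen_lt continuous_const (_root_.continuous_abs : Continuous fun x : ℝ => |x|)).measurableSet
    rw [hset, Measure.prod_prod, hμ, mul_zero]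
  have hpae : ∀ᵐ p : ℝ × ℝ ∂(ρ.prod μ), |p.2| ≤ b := by
    rw [ae_iff]; simpa [not_le] using hprodnull
  -- pointwise norm bound
  have hFbd : ∀ θ : ℝ, ∀ x : ℝ, |x| ≤ b → ‖F θ x‖ ≤ R * Cg := by
    intro θ x hx
    have h1 : ‖cm θ * Complex.I‖ = R := by
      rw [norm_mul, hcmn, Complex.norm_I, mul_one]
    have h2 : ‖g1 (cm θ)‖ ≤ Cg := hCg _ (by
      simpa [hcmn θ] using Metric.mem_closedBall.mpr (by simp [hcmn θ] : dist (cm θ) 0 ≤ R))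
    have h3 : (1:ℝ) ≤ ‖(x:ℂ) - cm θ‖ := by
      have : ‖cm θ‖ - ‖(x:ℂ)‖ ≤ ‖(x:ℂ) - cm θ‖ := by
        rw [norm_sub_rev]; exact norm_sub_norm_le _ _
      have hxn : ‖(x:ℂ)‖ = |x| := by simp [Complex.norm_real]
      rw [hcmn, hxn] at this
      linarith
    have h4 : ‖((x:ℂ) - cm θ)⁻¹‖ ≤ 1 := by
      rw [norm_inv]
      exact inv_le_one_of_one_le₀ h3
    calc ‖F θ x‖ = R * (‖g1 (cm θ)‖ * ‖((x:ℂ) - cm θ)⁻¹‖) := by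
          rw [hF]; simp only []; rw [norm_mul, norm_mul, hcmn, Complex.norm_I, mul_one, norm_mul]
      _ ≤ R * (Cg * 1) := by
          apply mul_le_mul_of_nonneg_left _ hR0.le
          exact mul_le_mul h2 h4 (norm_nonneg _) hCg0
      _ = R * Cg := by ring
  -- integrability on the product
  have hFmeas : AEStronglyMeasurable (Function.uncurry F) (ρ.prod μ) := by
    have m1 : Measurable fun p : ℝ × ℝ => cm p.1 :=
      (continuous_circleMap 0 R).measurable.comp measurable_fst
    have m2 : Measurable fun p : ℝ × ℝ => g1 (cm p.1) :=
      hg1.continuous.measurable.comp m1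
    have m3 : Measurable fun p : ℝ × ℝ => ((p.2 : ℂ)) :=
      Complex.continuous_ofReal.measurable.comp measurable_snd
    exact (((m1.mul measurable_const)).mul (m2.mul ((m3.sub m1).inv))).aestronglyMeasurable
  have hFint : Integrable (Function.uncurry F) (ρ.prod μ) := by
    refine Integrable.mono' (integrable_const (R * Cg)) hFmeas ?_
    filter_upwards [hpae] with p hp
    exact hFbd p.1 p.2 hp
  -- per-θ: pull constants out of the μ-integral
  have hpull : ∀ θ : ℝ, (∫ x : ℝ, F θ x ∂μ)
      = deriv (circleMap 0 R) θ • (g1 (cm θ) * ∫ x : ℝ, ((x:ℂ) - cm θ)⁻¹ ∂μ) := by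
    intro θ
    rw [deriv_circleMap, smul_eq_mul]
    rw [hF]
    simp only []
    rw [MeasureTheory.integral_const_mul, MeasureTheory.integral_const_mul]
  -- per-x Cauchy formula
  have hcauchy : ∀ x : ℝ, |x| ≤ b →
      (∫ θ in Ioc 0 (2*Real.pi), F θ x) = -(2*Real.pi*Complex.I) * g1 (x:ℂ) := by
    intro x hx
    have hxball : (x:ℂ) ∈ Metric.ball (0:ℂ) R := by
      simp only [Metric.mem_ball, dist_zero_right]
      have : ‖(x:ℂ)‖ = |x| := by simp [Complex.norm_real]
      rw [this]; linarith
    have hC := (hg1.diffContOnCl (s := Metric.ball (0:ℂ) R)).circleIntegral_sub_inv_smul hxball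
    have h1 : (∫ θ in Ioc 0 (2*Real.pi), F θ x)
        = ∫ θ in (0:ℝ)..(2*Real.pi), F θ x := by
      rw [intervalIntegral.integral_of_le Real.two_pi_pos.le]
    have h2 : (∫ θ in (0:ℝ)..(2*Real.pi), F θ x)
        = ∫ θ in (0:ℝ)..(2*Real.pi),
            -(deriv (circleMap 0 R) θ • ((circleMap 0 R θ - (x:ℂ))⁻¹ • g1 (circleMap 0 R θ))) := by
      apply intervalIntegral.integral_congr
      intro θ _
      rw [hF]
      simp only [deriv_circleMap, smul_eq_mul]
      rw [show ((x:ℂ) - cm θ) = -(cm θ - (x:ℂ)) by ring, inv_neg]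
      rw [hcm]
      ring
    rw [h1, h2, intervalIntegral.integral_neg]
    have h3 : (∫ θ in (0:ℝ)..(2*Real.pi),
        deriv (circleMap 0 R) θ • ((circleMap 0 R θ - (x:ℂ))⁻¹ • g1 (circleMap 0 R θ)))
        = ∮ w in C(0, R), (w - (x:ℂ))⁻¹ • g1 w := rfl
    rw [h3, hC, smul_eq_mul]
    ring
  -- Fubini
  have hswap : (∫ θ, (∫ x : ℝ, F θ x ∂μ) ∂ρ) = ∫ x : ℝ, (∫ θ, F θ x ∂ρ) ∂μ :=
    MeasureTheory.integral_integral_swap hFint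
  -- conclusion
  have hcircle : (∮ w in C(0, R), g1 w * ∫ x : ℝ, ((x:ℂ) - w)⁻¹ ∂μ)
      = ∫ θ, (∫ x : ℝ, F θ x ∂μ) ∂ρ := by
    have : (∮ w in C(0, R), g1 w * ∫ x : ℝ, ((x:ℂ) - w)⁻¹ ∂μ)
        = ∫ θ in (0:ℝ)..(2*Real.pi),
            deriv (circleMap 0 R) θ • (g1 (cm θ) * ∫ x : ℝ, ((x:ℂ) - cm θ)⁻¹ ∂μ) := rfl
    rw [this, intervalIntegral.integral_of_le Real.two_pi_pos.le]
    rw [hρ]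
    apply setIntegral_congr_fun measurableSet_Ioc
    intro θ _
    exact (hpull θ).symm
  have hfinal : (∫ x : ℝ, (∫ θ, F θ x ∂ρ) ∂μ) = -(2*Real.pi*Complex.I) * ∫ x : ℝ, g1 (x:ℂ) ∂μ := by
    rw [← MeasureTheory.integral_const_mul]
    apply integral_congr_ae
    filter_upwards [hxae] with x hx
    rw [hρ]
    exact hcauchy x hx
  constructor
  · have hii : Integrable (fun θ => ∫ x : ℝ, F θ x ∂μ) ρ := hFint.integral_prod_left
    rw [intervalIntegrable_iff_integrableOn_Ioc_of_le Real.two_pi_pos.le]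
    have : IntegrableOn (fun θ => ∫ x : ℝ, F θ x ∂μ) (Ioc 0 (2*Real.pi)) := by
      rwa [hρ] at hii
    apply this.congr_fun ?_ measurableSet_Ioc
    intro θ _
    exact hpull θ
  · rw [hcircle, hswap, hfinal]

theorem stmt_18 (V : ℂ → ℂ) (hV : Differentiable ℂ V)
    (g : ℂ → ℂ → ℂ)
    (hg : ∀ z x : ℂ, x ≠ z →
      g z x = (deriv V x - deriv V z - (x - z) * deriv (deriv V) z) / (2 * (x - z) ^ 2))
    (hgd : ∀ z : ℂ, g z z = deriv (deriv (deriv V)) z / 4)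
    (μ ν : Measure ℝ) [IsFiniteMeasure μ] [IsFiniteMeasure ν]
    (b r : ℝ) (hb : 0 < b) (hr : 1 ≤ r)
    (hμ : μ {x : ℝ | b < |x|} = 0) (hν : ν {x : ℝ | b < |x|} = 0) :
    (∀ z : ℂ, Differentiable ℂ (fun x => g z x)) ∧
    (∀ x : ℂ, Differentiable ℂ (fun z => g z x)) ∧
    (∀ z : ℂ,
      (∫ x : ℝ, g z (x : ℂ) ∂μ) - (∫ x : ℝ, g z (x : ℂ) ∂ν)
        = -(1 / (2 * Real.pi * Complex.I)) *
            ∮ w in C(0, b + r),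
              g z w * ((∫ x : ℝ, ((x : ℂ) - w)⁻¹ ∂μ) - ∫ x : ℝ, ((x : ℂ) - w)⁻¹ ∂ν)) ∧
    (∀ z : ℂ, ∀ Kg Km : ℝ,
      (∀ w ∈ Metric.sphere (0 : ℂ) (b + r), ‖g z w‖ ≤ Kg) →
      (∀ w ∈ Metric.sphere (0 : ℂ) (b + r),
        ‖(∫ x : ℝ, ((x : ℂ) - w)⁻¹ ∂μ) - ∫ x : ℝ, ((x : ℂ) - w)⁻¹ ∂ν‖ ≤ Km) →
      ‖(∫ x : ℝ, g z (x : ℂ) ∂μ) - (∫ x : ℝ, g z (x : ℂ) ∂ν)‖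
        ≤ (2 * Real.pi * (b + r)) * Kg * Km / (2 * Real.pi)) := by
  have hf : Differentiable ℂ (deriv V) := entire_deriv hV
  set f := deriv V with hfdef
  -- Part 1
  have part1 : ∀ z : ℂ, Differentiable ℂ (fun x => g z x) := by
    intro z
    have heq : (fun x => g z x) = fun x => dslope (dslope f z) z x / 2 := by
      funext x
      by_cases hx : x = z
      · subst hx
        rw [hgd, dslope_same, deriv_dslope_same hf]
        ring
      · rw [hg z x hx, dslope_of_ne _ hx, slope_def_field, dslope_of_ne _ hx,
          slope_def_field, dslope_same]
        have h0 : x - z ≠ 0 := sub_ne_zero.mpr hx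
        field_simp
        try ring
        try exact Or.inl trivial
    rw [heq]
    exact (entire_dslope (entire_dslope hf z) z).div_const 2
  -- Part 2
  have part2 : ∀ x : ℂ, Differentiable ℂ (fun z => g z x) := by
    intro x
    have hΦ : Differentiable ℂ (fun w => dslope f x w - deriv f w) :=
      (entire_dslope hf x).sub (entire_deriv hf)
    have heq : (fun z => g z x)
        = fun z => -(dslope (fun w => dslope f x w - deriv f w) x z) / 2 := by
      funext z
      by_cases hz : z = x
      · subst hz
        rw [hgd, dslope_same, deriv_fun_sub ((entire_dslope hf z) z) ((entire_deriv hf) z),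
          deriv_dslope_same hf]
        ring
      · have hx : x ≠ z := Ne.symm hz
        rw [hg z x hx, dslope_of_ne _ hz, slope_def_field, dslope_of_ne _ hz,
          slope_def_field, dslope_same]
        have h0 : z - x ≠ 0 := sub_ne_zero.mpr hz
        have h1 : x - z ≠ 0 := sub_ne_zero.mpr hx
        field_simp
        try ring
        try exact Or.inl trivial
    rw [heq]
    exact ((entire_dslope hΦ x).neg.div_const 2)
  -- Part 3
  have part3 : ∀ z : ℂ,
      (∫ x : ℝ, g z (x : ℂ) ∂μ) - (∫ x : ℝ, g z (x : ℂ) ∂ν)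
        = -(1 / (2 * Real.pi * Complex.I)) *
            ∮ w in C(0, b + r),
              g z w * ((∫ x : ℝ, ((x : ℂ) - w)⁻¹ ∂μ) - ∫ x : ℝ, ((x : ℂ) - w)⁻¹ ∂ν) := by
    intro z
    obtain ⟨k1i, k1⟩ := keyint (fun w => g z w) (part1 z) μ b r hb hr hμ
    obtain ⟨k2i, k2⟩ := keyint (fun w => g z w) (part1 z) ν b r hb hr hν
    have hsplit : (∮ w in C(0, b + r),
          g z w * ((∫ x : ℝ, ((x : ℂ) - w)⁻¹ ∂μ) - ∫ x : ℝ, ((x : ℂ) - w)⁻¹ ∂ν))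
        = (∮ w in C(0, b + r), g z w * ∫ x : ℝ, ((x : ℂ) - w)⁻¹ ∂μ)
          - ∮ w in C(0, b + r), g z w * ∫ x : ℝ, ((x : ℂ) - w)⁻¹ ∂ν := by
      have hdef : (∮ w in C(0, b + r),
            g z w * ((∫ x : ℝ, ((x : ℂ) - w)⁻¹ ∂μ) - ∫ x : ℝ, ((x : ℂ) - w)⁻¹ ∂ν))
          = ∫ θ in (0:ℝ)..(2*Real.pi),
              (deriv (circleMap 0 (b+r)) θ •
                (g z (circleMap 0 (b+r) θ) * ∫ x : ℝ, ((x:ℂ) - circleMap 0 (b+r) θ)⁻¹ ∂μ)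
              - deriv (circleMap 0 (b+r)) θ •
                (g z (circleMap 0 (b+r) θ) * ∫ x : ℝ, ((x:ℂ) - circleMap 0 (b+r) θ)⁻¹ ∂ν)) := by
        apply intervalIntegral.integral_congr
        intro θ _
        simp only [smul_eq_mul]
        ring
      rw [hdef, intervalIntegral.integral_sub k1i k2i]
      rfl
    rw [hsplit, k1, k2]
    have hpi : (Real.pi : ℂ) ≠ 0 := Complex.ofReal_ne_zero.mpr Real.pi_ne_zero
    field_simp [Complex.I_ne_zero]
    ring
  -- Part 4
  refine ⟨part1, part2, part3, ?_⟩
  intro z Kg Km hKg hKm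
  have hR0 : (0:ℝ) < b + r := by linarith
  have hw0 : circleMap 0 (b+r) 0 ∈ Metric.sphere (0:ℂ) (b+r) :=
    circleMap_mem_sphere 0 hR0.le 0
  have hKg0 : 0 ≤ Kg := le_trans (norm_nonneg _) (hKg _ hw0)
  have hKm0 : 0 ≤ Km := le_trans (norm_nonneg _) (hKm _ hw0)
  have hbound : ‖∮ w in C(0, b + r),
      g z w * ((∫ x : ℝ, ((x : ℂ) - w)⁻¹ ∂μ) - ∫ x : ℝ, ((x : ℂ) - w)⁻¹ ∂ν)‖
      ≤ 2 * Real.pi * (b + r) * (Kg * Km) := by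
    apply circleIntegral.norm_integral_le_of_norm_le_const hR0.le
    intro w hw
    rw [norm_mul]
    exact mul_le_mul (hKg w hw) (hKm w hw) (norm_nonneg _) hKg0
  rw [part3 z]
  have hnorm : ‖(-(1 / (2 * (Real.pi:ℂ) * Complex.I)))‖ = 1 / (2 * Real.pi) := by
    rw [norm_neg, norm_div, norm_one, norm_mul, norm_mul]
    simp [Real.pi_nonneg]
  rw [norm_mul, hnorm]
  calc (1 / (2 * Real.pi)) * ‖∮ w in C(0, b + r),
        g z w * ((∫ x : ℝ, ((x : ℂ) - w)⁻¹ ∂μ) - ∫ x : ℝ, ((x : ℂ) - w)⁻¹ ∂ν)‖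
      ≤ (1 / (2 * Real.pi)) * (2 * Real.pi * (b + r) * (Kg * Km)) := by
        apply mul_le_mul_of_nonneg_left hbound
        positivity
    _ = (2 * Real.pi * (b + r)) * Kg * Km / (2 * Real.pi) := by
        field_simp
end
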